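/- Let Y ∈ ℝ^{m×n} have singular value decomposition Y = UΣV^T. Then the singular value thresholding operator D_τ(Y) = U·S_τ(Σ)·V^T, obtained by applying soft-thresholding S_τ to the diagonal singular values, is the unique minimizer of Z ↦ (1/2)‖Z−Y‖_F² + τ‖Z‖_*. -/

import Mathlib

open Matrix

/-- The nuclear norm of a real matrix: the sum of its singular values. -/
noncomputable def nuclearNorm {m n : ℕ} (A : Matrix (Fin m) (Fin n) ℝ) : ℝ :=
  ∑ i, Real.sqrt ((show (Aᵀ * A).IsHermitian from by
    simpa using Matrix.isHermitian_conjTranspose_mul_self A).eigenvalues i)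

namespace SVT

variable {m n : ℕ}

/-- `G` is a (Euclidean) contraction. -/
def IsContraction (G : Matrix (Fin m) (Fin n) ℝ) : Prop :=
  ∀ x : Fin n → ℝ, ∑ i, (G.mulVec x i) ^ 2 ≤ ∑ j, (x j) ^ 2

lemma trace_form (A B : Matrix (Fin m) (Fin n) ℝ) :
    Matrix.trace (Aᵀ * B) = ∑ i, ∑ j, A i j * B i j := by
  rw [Matrix.trace]
  simp only [Matrix.diag, Matrix.mul_apply, Matrix.transpose_apply]
  exact Finset.sum_comm

/-- Spectral decomposition of `Aᴴ * A`. -/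
lemma exists_spectral (A : Matrix (Fin m) (Fin n) ℝ) :
    ∃ E : Matrix (Fin n) (Fin n) ℝ, Eᵀ * E = 1 ∧ E * Eᵀ = 1 ∧
      Aᴴ * A = E * diagonal (show (Aᵀ * A).IsHermitian from by simpa using Matrix.isHermitian_conjTranspose_mul_self A).eigenvalues * Eᵀ := by
  have hH := (show (Aᵀ * A).IsHermitian from by simpa using Matrix.isHermitian_conjTranspose_mul_self A)
  refine ⟨(hH.eigenvectorUnitary : Matrix (Fin n) (Fin n) ℝ), ?_, ?_, ?_⟩
  · have := Matrix.mem_unitaryGroup_iff'.mp hH.eigenvectorUnitary.2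
    simpa only [star_eq_conjTranspose, conjTranspose_eq_transpose_of_trivial] using this
  · have := Matrix.mem_unitaryGroup_iff.mp hH.eigenvectorUnitary.2
    simpa only [star_eq_conjTranspose, conjTranspose_eq_transpose_of_trivial] using this
  · have h := hH.spectral_theorem
    simp only [Unitary.conjStarAlgAut_apply, star_eq_conjTranspose, conjTranspose_eq_transpose_of_trivial,
      RCLike.ofReal_real_eq_id, Function.id_comp] at h ⊢
    convert h using 3

lemma contraction_trace_le (A G : Matrix (Fin m) (Fin n) ℝ) (hG : IsContraction G) :
    Matrix.trace (Gᵀ * A) ≤ nuclearNorm A := by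
  obtain ⟨E, hE1, hE2, hspec⟩ := exists_spectral A
  set μ := (show (Aᵀ * A).IsHermitian from by simpa using Matrix.isHermitian_conjTranspose_mul_self A).eigenvalues with hμ
  have hμ0 : ∀ j, 0 ≤ μ j := fun j => Matrix.eigenvalues_conjTranspose_mul_self_nonneg A j
  have hAA : Aᵀ * A = E * diagonal μ * Eᵀ := by
    simpa only [conjTranspose_eq_transpose_of_trivial] using hspec
  have hdiagAA : (A * E)ᵀ * (A * E) = diagonal μ := by
    rw [transpose_mul, Matrix.mul_assoc, ← Matrix.mul_assoc Aᵀ A E, hAA,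
      Matrix.mul_assoc (E * diagonal μ) Eᵀ E, hE1, Matrix.mul_one, ← Matrix.mul_assoc,
      hE1, Matrix.one_mul]
  have htr : Matrix.trace ((G * E)ᵀ * (A * E)) = Matrix.trace (Gᵀ * A) := by
    rw [transpose_mul, Matrix.mul_assoc, Matrix.trace_mul_comm, Matrix.mul_assoc,
      Matrix.mul_assoc, hE2, Matrix.mul_one]
  rw [← htr, trace_form, Finset.sum_comm]
  unfold nuclearNorm
  apply Finset.sum_le_sum
  intro j _
  have hA : ∑ i, ((A * E) i j) ^ 2 = μ j := by
    have h := congrFun (congrFun hdiagAA j) j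
    simpa [Matrix.mul_apply, pow_two, mul_comm] using h
  have hGcol : ∑ i, ((G * E) i j) ^ 2 ≤ 1 := by
    have hx := hG (fun k => E k j)
    have h1 : ∀ i, (G * E) i j = G.mulVec (fun k => E k j) i := fun i => by
      simp [Matrix.mul_apply, Matrix.mulVec, dotProduct]
    have h2 : ∑ k, (E k j) ^ 2 = 1 := by
      have h := congrFun (congrFun hE1 j) j
      simpa [Matrix.mul_apply, pow_two] using h
    calc ∑ i, ((G * E) i j) ^ 2 = ∑ i, (G.mulVec (fun k => E k j) i) ^ 2 := by
          simp only [h1]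
      _ ≤ ∑ k, (E k j) ^ 2 := hx
      _ = 1 := h2
  rcases le_or_gt (∑ i, (G * E) i j * (A * E) i j) 0 with h | h
  · exact h.trans (Real.sqrt_nonneg _)
  · refine (Real.le_sqrt h.le (hμ0 j)).mpr ?_
    calc (∑ i, (G * E) i j * (A * E) i j) ^ 2
        ≤ (∑ i, ((G * E) i j) ^ 2) * ∑ i, ((A * E) i j) ^ 2 :=
          Finset.sum_mul_sq_le_sq_mul_sq _ _ _
      _ ≤ 1 * μ j := by
          apply mul_le_mul hGcol (le_of_eq hA) ?_ zero_le_one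
          exact Finset.sum_nonneg fun i _ => sq_nonneg _
      _ = μ j := one_mul _

lemma sum_sq_mulVec {k : ℕ} (B : Matrix (Fin k) (Fin n) ℝ) (x : Fin n → ℝ) :
    ∑ i, (B.mulVec x i) ^ 2 = dotProduct x ((Bᵀ * B).mulVec x) := by
  rw [← Matrix.mulVec_mulVec, dotProduct_mulVec, Matrix.vecMul_transpose]
  simp [dotProduct, pow_two]

lemma exists_dual (A : Matrix (Fin m) (Fin n) ℝ) :
    ∃ G : Matrix (Fin m) (Fin n) ℝ, IsContraction G ∧
      Matrix.trace (Gᵀ * A) = nuclearNorm A := by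
  obtain ⟨E, hE1, hE2, hspec⟩ := exists_spectral A
  set μ := (show (Aᵀ * A).IsHermitian from by simpa using Matrix.isHermitian_conjTranspose_mul_self A).eigenvalues with hμ
  have hμ0 : ∀ j, 0 ≤ μ j := fun j => Matrix.eigenvalues_conjTranspose_mul_self_nonneg A j
  have hAA : Aᵀ * A = E * diagonal μ * Eᵀ := by
    simpa only [conjTranspose_eq_transpose_of_trivial] using hspec
  have hEE : ∀ {k : ℕ} (X : Matrix (Fin n) (Fin k) ℝ), Eᵀ * (E * X) = X := by
    intro k X; rw [← Matrix.mul_assoc, hE1, Matrix.one_mul]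
  set ν : Fin n → ℝ := fun j => (Real.sqrt (μ j))⁻¹ with hν
  have hνν : ∀ j, ν j * ν j = (μ j)⁻¹ := by
    intro j
    simp only [hν]
    rw [← mul_inv, Real.mul_self_sqrt (hμ0 j)]
  have htrdiag : ∀ j, ν j * μ j = Real.sqrt (μ j) := by
    intro j
    rcases eq_or_lt_of_le (hμ0 j) with h0 | h0
    · simp [hν, ← h0]
    · have hs : (0:ℝ) < Real.sqrt (μ j) := Real.sqrt_pos.mpr h0
      calc ν j * μ j = (Real.sqrt (μ j))⁻¹ * (Real.sqrt (μ j) * Real.sqrt (μ j)) := by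
            simp only [hν]; rw [Real.mul_self_sqrt (hμ0 j)]
        _ = Real.sqrt (μ j) := by rw [← mul_assoc, inv_mul_cancel₀ hs.ne', one_mul]
  refine ⟨A * E * diagonal ν * Eᵀ, ?_, ?_⟩
  · intro x
    have hGG : (A * E * diagonal ν * Eᵀ)ᵀ * (A * E * diagonal ν * Eᵀ)
        = E * (diagonal (ν * μ * ν) * Eᵀ) := by
      simp only [transpose_mul, diagonal_transpose, transpose_transpose, Matrix.mul_assoc]
      rw [← Matrix.mul_assoc Aᵀ A, hAA]
      simp only [Matrix.mul_assoc]
      rw [hEE, hEE, show diagonal (ν * μ * ν) = diagonal ν * diagonal μ * diagonal ν from by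
        rw [diagonal_mul_diagonal, diagonal_mul_diagonal]; rfl]
      simp only [Matrix.mul_assoc]
    rw [sum_sq_mulVec, hGG]
    rw [← Matrix.mulVec_mulVec, ← Matrix.mulVec_mulVec, dotProduct_mulVec,
      ← Matrix.mulVec_transpose]
    set y := Eᵀ.mulVec x with hyy
    have hbound : ∀ j, y j * ((ν * μ * ν) j * y j) ≤ y j ^ 2 := by
      intro j
      have he : (ν * μ * ν) j ≤ 1 := by
        have h1 : (ν * μ * ν) j = μ j * (ν j * ν j) := by
          simp only [Pi.mul_apply]; ring
        rw [h1, hνν j]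
        rcases eq_or_lt_of_le (hμ0 j) with h0 | h0
        · simp [← h0]
        · rw [mul_inv_cancel₀ (ne_of_gt h0)]
      nlinarith [sq_nonneg (y j)]
    calc dotProduct y ((diagonal (ν * μ * ν)).mulVec y)
        = ∑ j, y j * ((ν * μ * ν) j * y j) := by
          simp [dotProduct, Matrix.mulVec_diagonal]
      _ ≤ ∑ j, y j ^ 2 := Finset.sum_le_sum fun j _ => hbound j
      _ = ∑ j, x j ^ 2 := by
          have hW : (Eᵀ)ᵀ * Eᵀ = 1 := by rw [transpose_transpose, hE2]
          have := sum_sq_mulVec Eᵀ x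
          rw [hW, Matrix.one_mulVec] at this
          rw [hyy, this]
          simp [dotProduct, pow_two]
  · have hGt : (A * E * diagonal ν * Eᵀ)ᵀ * A = E * (diagonal ν * (diagonal μ * Eᵀ)) := by
      simp only [transpose_mul, diagonal_transpose, transpose_transpose, Matrix.mul_assoc]
      rw [hAA]
      simp only [Matrix.mul_assoc]
      rw [hEE]
    rw [hGt, Matrix.trace_mul_comm, Matrix.mul_assoc (diagonal ν) (diagonal μ * Eᵀ) E,
      Matrix.mul_assoc (diagonal μ) Eᵀ E, hE1, Matrix.mul_one, diagonal_mul_diagonal,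
      Matrix.trace_diagonal]
    unfold nuclearNorm
    apply Finset.sum_congr rfl
    intro j _
    exact htrdiag j

lemma contraction_entry_abs_le {G : Matrix (Fin m) (Fin n) ℝ} (hG : IsContraction G)
    (i : Fin m) (j : Fin n) : |G i j| ≤ 1 := by
  set e : Fin n → ℝ := fun k => if k = j then 1 else 0 with he
  have hx := hG e
  have h1 : ∀ i' : Fin m, G.mulVec e i' = G i' j := by
    intro i'
    simp [Matrix.mulVec, dotProduct, he, mul_ite]
  have h2 : ∑ k, (e k) ^ 2 = 1 := by
    simp [he, ite_pow]
  simp only [h1, h2] at hx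
  have h3 : (G i j) ^ 2 ≤ ∑ i', (G i' j) ^ 2 :=
    Finset.single_le_sum (f := fun i' => (G i' j) ^ 2) (fun _ _ => sq_nonneg _)
      (Finset.mem_univ i)
  nlinarith [sq_abs (G i j), abs_nonneg (G i j)]

lemma mulVec_orthogonal_sum_sq {k : ℕ} {W : Matrix (Fin k) (Fin k) ℝ} (hW : Wᵀ * W = 1)
    (x : Fin k → ℝ) : ∑ i, (W.mulVec x i) ^ 2 = ∑ j, (x j) ^ 2 := by
  have h := sum_sq_mulVec W x
  rw [hW, Matrix.one_mulVec] at h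
  rw [h]
  simp [dotProduct, pow_two]

lemma conj_le (U : Matrix (Fin m) (Fin m) ℝ) (V : Matrix (Fin n) (Fin n) ℝ)
    (hU1 : Uᵀ * U = 1) (hU2 : U * Uᵀ = 1) (hV1 : Vᵀ * V = 1) (hV2 : V * Vᵀ = 1)
    (A : Matrix (Fin m) (Fin n) ℝ) :
    nuclearNorm (U * A * Vᵀ) ≤ nuclearNorm A := by
  obtain ⟨G, hG, hGtr⟩ := exists_dual (U * A * Vᵀ)
  rw [← hGtr]
  have hGc : IsContraction (Uᵀ * G * V) := by
    intro x
    have e : (Uᵀ * G * V).mulVec x = Uᵀ.mulVec (G.mulVec (V.mulVec x)) := by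
      rw [← Matrix.mulVec_mulVec, ← Matrix.mulVec_mulVec]
    rw [e]
    calc ∑ i, (Uᵀ.mulVec (G.mulVec (V.mulVec x)) i) ^ 2
        = ∑ i, (G.mulVec (V.mulVec x) i) ^ 2 :=
          mulVec_orthogonal_sum_sq (by rw [transpose_transpose, hU2]) _
      _ ≤ ∑ j, (V.mulVec x j) ^ 2 := hG _
      _ = ∑ j, (x j) ^ 2 := mulVec_orthogonal_sum_sq hV1 x
  have htr : Matrix.trace (Gᵀ * (U * A * Vᵀ)) = Matrix.trace ((Uᵀ * G * V)ᵀ * A) := by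
    have e : (Uᵀ * G * V)ᵀ * A = Vᵀ * (Gᵀ * (U * A)) := by
      simp only [transpose_mul, transpose_transpose, Matrix.mul_assoc]
    rw [e, Matrix.trace_mul_comm Vᵀ (Gᵀ * (U * A))]
    simp only [Matrix.mul_assoc]
  rw [htr]
  exact contraction_trace_le A _ hGc

lemma nuclearNorm_conj (U : Matrix (Fin m) (Fin m) ℝ) (V : Matrix (Fin n) (Fin n) ℝ)
    (hU : U ∈ Matrix.orthogonalGroup (Fin m) ℝ) (hV : V ∈ Matrix.orthogonalGroup (Fin n) ℝ)
    (A : Matrix (Fin m) (Fin n) ℝ) :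
    nuclearNorm (U * A * Vᵀ) = nuclearNorm A := by
  have hU1 : Uᵀ * U = 1 := by
    have := Matrix.mem_unitaryGroup_iff'.mp hU
    simpa only [star_eq_conjTranspose, conjTranspose_eq_transpose_of_trivial] using this
  have hU2 : U * Uᵀ = 1 := by
    have := Matrix.mem_unitaryGroup_iff.mp hU
    simpa only [star_eq_conjTranspose, conjTranspose_eq_transpose_of_trivial] using this
  have hV1 : Vᵀ * V = 1 := by
    have := Matrix.mem_unitaryGroup_iff'.mp hV
    simpa only [star_eq_conjTranspose, conjTranspose_eq_transpose_of_trivial] using this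
  have hV2 : V * Vᵀ = 1 := by
    have := Matrix.mem_unitaryGroup_iff.mp hV
    simpa only [star_eq_conjTranspose, conjTranspose_eq_transpose_of_trivial] using this
  refine le_antisymm (conj_le U V hU1 hU2 hV1 hV2 A) ?_
  have e : Uᵀ * (U * A * Vᵀ) * (Vᵀ)ᵀ = A := by
    rw [transpose_transpose]
    simp only [Matrix.mul_assoc]
    rw [hV1, Matrix.mul_one, ← Matrix.mul_assoc, hU1, Matrix.one_mul]
  calc nuclearNorm A = nuclearNorm (Uᵀ * (U * A * Vᵀ) * (Vᵀ)ᵀ) := by rw [e]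
    _ ≤ nuclearNorm (U * A * Vᵀ) :=
        conj_le Uᵀ Vᵀ (by rw [transpose_transpose, hU2]) (by rw [transpose_transpose, hU1])
          (by rw [transpose_transpose, hV2]) (by rw [transpose_transpose, hV1]) _

lemma sum_diag_ite {α : Type*} [AddCommMonoid α] (k : ℕ) (c : ℕ) (f : Fin k → α) :
    (∑ j : Fin k, if (j : ℕ) = c then f j else 0) = if h : c < k then f ⟨c, h⟩ else 0 := by
  split_ifs with h
  · refine Finset.sum_eq_single_of_mem ⟨c, h⟩ (Finset.mem_univ _) (fun b _ hb => ?_) |>.trans ?_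
    · exact if_neg (by simpa [Fin.ext_iff] using hb)
    · exact if_pos rfl
  · exact Finset.sum_eq_zero fun j _ => if_neg (fun hj => h (by rw [← hj]; exact j.isLt))

lemma diag_abs_le_nuclearNorm (A : Matrix (Fin m) (Fin n) ℝ) :
    (∑ i : Fin m, ∑ j : Fin n, if (i : ℕ) = (j : ℕ) then |A i j| else 0) ≤ nuclearNorm A := by
  set G : Matrix (Fin m) (Fin n) ℝ :=
    fun i j => if (i : ℕ) = (j : ℕ) then (if 0 ≤ A i j then 1 else -1) else 0 with hGdef
  have hmv : ∀ (x : Fin n → ℝ) (i : Fin m), G.mulVec x i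
      = if h : (i : ℕ) < n then (if 0 ≤ A i ⟨(i : ℕ), h⟩ then 1 else -1) * x ⟨(i : ℕ), h⟩
        else 0 := by
    intro x i
    have hterm : ∀ j : Fin n, G i j * x j
        = (if (j : ℕ) = (i : ℕ) then (if 0 ≤ A i j then (1:ℝ) else -1) * x j else 0) := by
      intro j
      simp only [hGdef]
      by_cases h : (i : ℕ) = (j : ℕ)
      · rw [if_pos h, if_pos h.symm]
      · rw [if_neg h, if_neg (Ne.symm h), zero_mul]
    rw [Matrix.mulVec, dotProduct, Finset.sum_congr rfl (fun j _ => hterm j),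
      sum_diag_ite]
  have hGc : IsContraction G := by
    intro x
    have hsq : ∀ i : Fin m, (G.mulVec x i) ^ 2
        = (if h : (i : ℕ) < n then (x ⟨(i : ℕ), h⟩) ^ 2 else 0) := by
      intro i
      rw [hmv]
      split_ifs with h h'
      · ring
      · ring
      · exact zero_pow two_ne_zero
    calc ∑ i, (G.mulVec x i) ^ 2
        = ∑ i : Fin m, (if h : (i : ℕ) < n then (x ⟨(i : ℕ), h⟩) ^ 2 else 0) :=
          Finset.sum_congr rfl fun i _ => hsq i
      _ = ∑ i : Fin m, ∑ j : Fin n, (if (j : ℕ) = (i : ℕ) then x j ^ 2 else 0) :=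
          Finset.sum_congr rfl fun i _ => (sum_diag_ite n i (fun j => x j ^ 2)).symm
      _ = ∑ j : Fin n, ∑ i : Fin m, (if (j : ℕ) = (i : ℕ) then x j ^ 2 else 0) :=
          Finset.sum_comm
      _ ≤ ∑ j : Fin n, (x j) ^ 2 := by
          apply Finset.sum_le_sum
          intro j _
          have : ∑ i : Fin m, (if (j : ℕ) = (i : ℕ) then x j ^ 2 else 0)
              = ∑ i : Fin m, (if (i : ℕ) = (j : ℕ) then x j ^ 2 else 0) := by
            apply Finset.sum_congr rfl
            intro i _
            by_cases h : (j : ℕ) = (i : ℕ)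
            · rw [if_pos h, if_pos h.symm]
            · rw [if_neg h, if_neg (Ne.symm h)]
          rw [this, sum_diag_ite]
          split_ifs with h
          · exact le_rfl
          · exact sq_nonneg _
  have heq : (∑ i : Fin m, ∑ j : Fin n, if (i : ℕ) = (j : ℕ) then |A i j| else 0)
      = Matrix.trace (Gᵀ * A) := by
    rw [trace_form]
    apply Finset.sum_congr rfl
    intro i _
    apply Finset.sum_congr rfl
    intro j _
    simp only [hGdef]
    by_cases h : (i : ℕ) = (j : ℕ)
    · rw [if_pos h, if_pos h]
      by_cases h' : 0 ≤ A i j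
      · rw [if_pos h', one_mul, abs_of_nonneg h']
      · rw [if_neg h', neg_one_mul, abs_of_neg (lt_of_not_ge h')]
    · rw [if_neg h, if_neg h, zero_mul]
  rw [heq]
  exact contraction_trace_le A G hGc

lemma nuclearNorm_diag_le (A : Matrix (Fin m) (Fin n) ℝ)
    (hdiag : ∀ (i : Fin m) (j : Fin n), (i : ℕ) ≠ (j : ℕ) → A i j = 0) (hpos : ∀ i j, 0 ≤ A i j) :
    nuclearNorm A ≤ ∑ i : Fin m, ∑ j : Fin n, if (i : ℕ) = (j : ℕ) then A i j else 0 := by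
  obtain ⟨G, hG, htr⟩ := exists_dual A
  rw [← htr, trace_form]
  apply Finset.sum_le_sum
  intro i _
  apply Finset.sum_le_sum
  intro j _
  by_cases h : (i : ℕ) = (j : ℕ)
  · rw [if_pos h]
    have h1 := (abs_le.mp (contraction_entry_abs_le hG i j)).2
    have h2 := (abs_le.mp (contraction_entry_abs_le hG i j)).1
    nlinarith [hpos i j]
  · rw [if_neg h, hdiag i j h, mul_zero]

lemma frobenius_conj (U : Matrix (Fin m) (Fin m) ℝ) (V : Matrix (Fin n) (Fin n) ℝ)
    (hU : Uᵀ * U = 1) (hV : Vᵀ * V = 1) (M : Matrix (Fin m) (Fin n) ℝ) :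
    ∑ i, ∑ j, ((U * M * Vᵀ) i j) ^ 2 = ∑ i, ∑ j, (M i j) ^ 2 := by
  have l : ∀ B : Matrix (Fin m) (Fin n) ℝ, ∑ i, ∑ j, (B i j) ^ 2 = Matrix.trace (Bᵀ * B) := by
    intro B
    rw [trace_form]
    simp [pow_two]
  rw [l, l]
  have e : (U * M * Vᵀ)ᵀ * (U * M * Vᵀ) = V * (Mᵀ * ((Uᵀ * U) * (M * Vᵀ))) := by
    simp only [transpose_mul, transpose_transpose, Matrix.mul_assoc]
  rw [e, hU, Matrix.one_mul, Matrix.trace_mul_comm]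
  simp only [Matrix.mul_assoc]
  rw [hV, Matrix.mul_one]

lemma scalar_ineq (τ σ w : ℝ) (hσ : 0 ≤ σ) (hτ : 0 < τ) :
    (1/2) * (max (σ - τ) 0 - σ)^2 + τ * max (σ - τ) 0 + (1/2) * (w - max (σ - τ) 0)^2
      ≤ (1/2) * (w - σ)^2 + τ * |w| := by
  rcases le_total σ τ with h | h
  · rw [max_eq_right (by linarith)]
    rcases abs_cases w with ⟨hw, _⟩ | ⟨hw, _⟩ <;> rw [hw] <;> nlinarith
  · rw [max_eq_left (by linarith)]
    rcases abs_cases w with ⟨hw, _⟩ | ⟨hw, _⟩ <;> rw [hw] <;> nlinarith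

end SVT


/-- Singular value thresholding: if `Y = U Sig Vᵀ` is a singular value decomposition of
`Y ∈ ℝ^{m×n}` (with `U, V` orthogonal and `Sig` a rectangular diagonal matrix with
nonnegative diagonal), then `D_τ(Y) = U S_τ(Sig) Vᵀ`, obtained by soft-thresholding the
singular values, is the unique minimizer of `Z ↦ (1/2)‖Z - Y‖_F² + τ‖Z‖_*`. -/
theorem singular_value_thresholding (m n : ℕ) (τ : ℝ) (hτ : 0 < τ)
    (Y : Matrix (Fin m) (Fin n) ℝ)
    (U : Matrix (Fin m) (Fin m) ℝ) (V : Matrix (Fin n) (Fin n) ℝ)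
    (Sig : Matrix (Fin m) (Fin n) ℝ)
    (hU : U ∈ Matrix.orthogonalGroup (Fin m) ℝ)
    (hV : V ∈ Matrix.orthogonalGroup (Fin n) ℝ)
    (hSigdiag : ∀ (i : Fin m) (j : Fin n), (i : ℕ) ≠ (j : ℕ) → Sig i j = 0)
    (hSignonneg : ∀ i j, 0 ≤ Sig i j)
    (hSVD : Y = U * Sig * Vᵀ)
    (SτSig : Matrix (Fin m) (Fin n) ℝ)
    (hSτSig : ∀ (i : Fin m) (j : Fin n), SτSig i j = if (i : ℕ) = (j : ℕ) then max (Sig i j - τ) 0 else 0) :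
    (∀ Z : Matrix (Fin m) (Fin n) ℝ,
      (1 / 2) * (∑ i, ∑ j, (U * SτSig * Vᵀ - Y) i j ^ 2) + τ * nuclearNorm (U * SτSig * Vᵀ)
        ≤ (1 / 2) * (∑ i, ∑ j, (Z - Y) i j ^ 2) + τ * nuclearNorm Z) ∧
    (∀ Z : Matrix (Fin m) (Fin n) ℝ,
      (∀ W : Matrix (Fin m) (Fin n) ℝ,
        (1 / 2) * (∑ i, ∑ j, (Z - Y) i j ^ 2) + τ * nuclearNorm Z
          ≤ (1 / 2) * (∑ i, ∑ j, (W - Y) i j ^ 2) + τ * nuclearNorm W) →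
      Z = U * SτSig * Vᵀ) := by
  have hU1 : Uᵀ * U = 1 := by
    have := Matrix.mem_unitaryGroup_iff'.mp hU
    simpa only [star_eq_conjTranspose, conjTranspose_eq_transpose_of_trivial] using this
  have hU2 : U * Uᵀ = 1 := by
    have := Matrix.mem_unitaryGroup_iff.mp hU
    simpa only [star_eq_conjTranspose, conjTranspose_eq_transpose_of_trivial] using this
  have hV1 : Vᵀ * V = 1 := by
    have := Matrix.mem_unitaryGroup_iff'.mp hV
    simpa only [star_eq_conjTranspose, conjTranspose_eq_transpose_of_trivial] using this
  have hV2 : V * Vᵀ = 1 := by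
    have := Matrix.mem_unitaryGroup_iff.mp hV
    simpa only [star_eq_conjTranspose, conjTranspose_eq_transpose_of_trivial] using this
  set D := U * SτSig * Vᵀ with hD
  have hSτdiag : ∀ (i : Fin m) (j : Fin n), (i : ℕ) ≠ (j : ℕ) → SτSig i j = 0 := by
    intro i j h
    rw [hSτSig, if_neg h]
  have hSτpos : ∀ i j, 0 ≤ SτSig i j := by
    intro i j
    rw [hSτSig]
    split_ifs
    · exact le_max_right _ _
    · exact le_rfl
  have hnucD : nuclearNorm D
      = ∑ i : Fin m, ∑ j : Fin n, (if (i : ℕ) = (j : ℕ) then SτSig i j else 0) := by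
    rw [hD, SVT.nuclearNorm_conj U V hU hV]
    refine le_antisymm (SVT.nuclearNorm_diag_le _ hSτdiag hSτpos) ?_
    calc (∑ i : Fin m, ∑ j : Fin n, (if (i : ℕ) = (j : ℕ) then SτSig i j else 0))
        = ∑ i : Fin m, ∑ j : Fin n, (if (i : ℕ) = (j : ℕ) then |SτSig i j| else 0) := by
          refine Finset.sum_congr rfl fun i _ => Finset.sum_congr rfl fun j _ => ?_
          by_cases h : (i : ℕ) = (j : ℕ)
          · rw [if_pos h, if_pos h, abs_of_nonneg (hSτpos i j)]
          · rw [if_neg h, if_neg h]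
      _ ≤ nuclearNorm SτSig := SVT.diag_abs_le_nuclearNorm _
  have key : ∀ Z : Matrix (Fin m) (Fin n) ℝ,
      (1 / 2) * (∑ i, ∑ j, (D - Y) i j ^ 2) + τ * nuclearNorm D
        + (1 / 2) * (∑ i, ∑ j, (Z - D) i j ^ 2)
      ≤ (1 / 2) * (∑ i, ∑ j, (Z - Y) i j ^ 2) + τ * nuclearNorm Z := by
    intro Z
    set W := Uᵀ * Z * V with hW
    have hZ : Z = U * W * Vᵀ := by
      rw [hW]
      simp only [Matrix.mul_assoc]
      rw [hV2, Matrix.mul_one, ← Matrix.mul_assoc, hU2, Matrix.one_mul]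
    have hZY : Z - Y = U * (W - Sig) * Vᵀ := by
      rw [hSVD]
      conv_lhs => rw [hZ]
      rw [← Matrix.sub_mul, ← Matrix.mul_sub]
    have hZD : Z - D = U * (W - SτSig) * Vᵀ := by
      rw [hD]
      conv_lhs => rw [hZ]
      rw [← Matrix.sub_mul, ← Matrix.mul_sub]
    have hDY : D - Y = U * (SτSig - Sig) * Vᵀ := by
      rw [hD, hSVD, ← Matrix.sub_mul, ← Matrix.mul_sub]
    rw [hZY, hZD, hDY, SVT.frobenius_conj U V hU1 hV1, SVT.frobenius_conj U V hU1 hV1,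
      SVT.frobenius_conj U V hU1 hV1, hnucD]
    have hnucZ : nuclearNorm Z = nuclearNorm W := by
      conv_lhs => rw [hZ]
      rw [SVT.nuclearNorm_conj U V hU hV]
    rw [hnucZ]
    have hnucW := SVT.diag_abs_le_nuclearNorm W
    have H : ∑ i : Fin m, ∑ j : Fin n,
        ((1/2) * ((SτSig - Sig) i j) ^ 2 + τ * (if (i : ℕ) = (j : ℕ) then SτSig i j else 0)
          + (1/2) * ((W - SτSig) i j) ^ 2)
        ≤ ∑ i : Fin m, ∑ j : Fin n,
        ((1/2) * ((W - Sig) i j) ^ 2 + τ * (if (i : ℕ) = (j : ℕ) then |W i j| else 0)) := by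
      refine Finset.sum_le_sum fun i _ => Finset.sum_le_sum fun j _ => ?_
      by_cases h : (i : ℕ) = (j : ℕ)
      · simp only [Matrix.sub_apply, if_pos h, hSτSig i j]
        exact SVT.scalar_ineq τ (Sig i j) (W i j) (hSignonneg i j) hτ
      · simp only [Matrix.sub_apply, if_neg h, hSτSig i j, hSigdiag i j h]
        simp
    simp only [Finset.sum_add_distrib, ← Finset.mul_sum] at H
    have hτW : τ * (∑ i : Fin m, ∑ j : Fin n, if (i : ℕ) = (j : ℕ) then |W i j| else 0)
        ≤ τ * nuclearNorm W := mul_le_mul_of_nonneg_left hnucW hτ.le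
    linarith
  constructor
  · intro Z
    have h := key Z
    have hpos : (0:ℝ) ≤ ∑ i, ∑ j, (Z - D) i j ^ 2 :=
      Finset.sum_nonneg fun i _ => Finset.sum_nonneg fun j _ => sq_nonneg _
    linarith
  · intro Z hZmin
    have h1 := hZmin D
    have h2 := key Z
    have h3 : ∑ i, ∑ j, (Z - D) i j ^ 2 ≤ 0 := by linarith
    have hz : ∑ i, ∑ j, (Z - D) i j ^ 2 = 0 :=
      le_antisymm h3 (Finset.sum_nonneg fun i _ => Finset.sum_nonneg fun j _ => sq_nonneg _)
    ext i j
    have hi := (Finset.sum_eq_zero_iff_of_nonneg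
      (fun i _ => Finset.sum_nonneg fun j _ => sq_nonneg ((Z - D) i j))).mp hz i
      (Finset.mem_univ i)
    have hij := (Finset.sum_eq_zero_iff_of_nonneg
      (fun j _ => sq_nonneg ((Z - D) i j))).mp hi j (Finset.mem_univ j)
    have h0 : (Z - D) i j = 0 := by
      have := sq_eq_zero_iff.mp hij
      exact this
    have := sub_eq_zero.mp (by simpa [Matrix.sub_apply] using h0)
    exact this
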